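/- Let Θ be an inner function with values in L(E), let Θ̃(z) = Θ(z̄)*, and let τ be the unitary operator from K_Θ onto K_Θ̃ given by (τf)(e^{it}) = e^{-it} Θ(e^{-it})* f(e^{-it}). If f ∈ K_Θ̃ is orthogonal to D̃_* = {(1/z)(Θ̃(z) − Θ̃(0))x : x ∈ E}, then S_Θ S_Θ* (τ* f) = τ* f, where S_Θ is the compressed shift on K_Θ. -/

import Mathlib

open MeasureTheory Complex ContinuousLinearMap
open scoped ComplexInnerProductSpace

noncomputable section

/-- The circle `𝕋`, realized as `ℝ / 2πℤ`; the point `t` corresponds to `e^{it}`. -/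
abbrev Circle2pi : Type := AddCircle (2 * Real.pi)

instance : Fact (0 < 2 * Real.pi) := ⟨by positivity⟩

/-- Normalized Haar (arc-length) measure on the circle. -/
abbrev haarCircle2pi : Measure Circle2pi := AddCircle.haarAddCircle

variable {E : Type} [NormedAddCommGroup E] [InnerProductSpace ℂ E] [FiniteDimensional ℂ E]

/-- `Θ`, given by its boundary-value function on the circle, is an inner function: it is
(a.e. strongly) measurable, its boundary values are a.e. unitary operators on `E`, and its
Fourier coefficients of negative index vanish (the latter says exactly that `Θ` is the
boundary-value function of a bounded analytic `L(E)`-valued function on the unit disc,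
i.e. an element of `H^∞(L(E))`). -/
structure IsInner (Θ : Circle2pi → (E →L[ℂ] E)) : Prop where
  meas : AEStronglyMeasurable Θ haarCircle2pi
  unit : ∀ᵐ t ∂haarCircle2pi, Θ t ∈ unitary (E →L[ℂ] E)
  anal : ∀ n : ℤ, n < 0 → fourierCoeff Θ n = 0

/-- Membership in the Hardy space `H²(E)`, viewed as the subspace of `L²(E)` of functions
whose Fourier coefficients of negative index vanish. -/
def MemH2 (f : Lp E 2 haarCircle2pi) : Prop :=
  ∀ n : ℤ, n < 0 → fourierCoeff (⇑f) n = 0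

/-- Membership in the model space `K_Θ = H²(E) ⊖ Θ H²(E)`: `f` belongs to `H²(E)` and is
orthogonal to `Θ H²(E)`. -/
def MemK (Θ : Circle2pi → (E →L[ℂ] E)) (f : Lp E 2 haarCircle2pi) : Prop :=
  MemH2 f ∧ ∀ g : Lp E 2 haarCircle2pi, MemH2 g →
    ∫ t, ⟪f t, Θ t (g t)⟫ ∂haarCircle2pi = 0

/-- The boundary values of `Θ̃(z) = Θ(z̄)*`, namely `Θ̃(e^{it}) = Θ(e^{-it})*`. -/
def tild (Θ : Circle2pi → (E →L[ℂ] E)) : Circle2pi → (E →L[ℂ] E) :=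
  fun t => adjoint (Θ (-t))

/-- `τ` is the operator on `L²(E)` given by `(τ f)(e^{it}) = e^{-it} Θ(e^{-it})* f(e^{-it})`. -/
def IsTau (Θ : Circle2pi → (E →L[ℂ] E))
    (τ : Lp E 2 haarCircle2pi →L[ℂ] Lp E 2 haarCircle2pi) : Prop :=
  ∀ f : Lp E 2 haarCircle2pi,
    (⇑(τ f)) =ᵐ[haarCircle2pi] fun t => fourier (-1) t • (adjoint (Θ (-t))) (f (-t))

/-- `P` is the orthogonal projection of `L²(E)` onto the model space `K_Θ`:
its range lies in `K_Θ`, it fixes `K_Θ`, and `f - P f` is orthogonal to `K_Θ`. -/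
def IsProjK (Θ : Circle2pi → (E →L[ℂ] E))
    (P : Lp E 2 haarCircle2pi →L[ℂ] Lp E 2 haarCircle2pi) : Prop :=
  (∀ f, MemK Θ (P f)) ∧ (∀ f, MemK Θ f → P f = f) ∧
    ∀ f g, MemK Θ g → ⟪f - P f, g⟫ = 0

/-- `S` acts on the model space `K_Θ` as the compressed shift `S_Θ f = P_Θ (z f)`:
for `f ∈ K_Θ`, `S f ∈ K_Θ` and `S f - z f` is orthogonal to `K_Θ`, i.e.
`⟪S f, g⟫ = ⟪z f, g⟫` for all `g ∈ K_Θ`. -/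
def IsCompShift (Θ : Circle2pi → (E →L[ℂ] E))
    (S : Lp E 2 haarCircle2pi →L[ℂ] Lp E 2 haarCircle2pi) : Prop :=
  ∀ f, MemK Θ f → MemK Θ (S f) ∧
    ∀ g, MemK Θ g → ⟪S f, g⟫ = ∫ t, ⟪fourier 1 t • f t, g t⟫ ∂haarCircle2pi

/-- `A` acts on the model space `K_Θ` as the adjoint `S_Θ*` of the compressed shift `S`:
for `f ∈ K_Θ`, `A f ∈ K_Θ` and `⟪A f, g⟫ = ⟪f, S g⟫` for all `g ∈ K_Θ`. -/
def IsCompShiftAdj (Θ : Circle2pi → (E →L[ℂ] E))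
    (S A : Lp E 2 haarCircle2pi →L[ℂ] Lp E 2 haarCircle2pi) : Prop :=
  ∀ f, MemK Θ f → MemK Θ (A f) ∧ ∀ g, MemK Θ g → ⟪A f, g⟫ = ⟪f, S g⟫

/-- The subspace `D = {(I - Θ(z) Θ(0)*) x : x ∈ E}` of `K_Θ`, described through boundary
values; here `Θ(0)` is the 0-th Fourier coefficient of `Θ`. -/
def DSet (Θ : Circle2pi → (E →L[ℂ] E)) : Set (Lp E 2 haarCircle2pi) :=
  {f | ∃ x : E, (⇑f) =ᵐ[haarCircle2pi]
    fun t => x - Θ t (adjoint (fourierCoeff Θ 0) x)}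

/-- The subspace `D_* = {(1/z)(Θ(z) - Θ(0)) x : x ∈ E}` of `K_Θ`, described through
boundary values. -/
def DStarSet (Θ : Circle2pi → (E →L[ℂ] E)) : Set (Lp E 2 haarCircle2pi) :=
  {f | ∃ x : E, (⇑f) =ᵐ[haarCircle2pi]
    fun t => fourier (-1) t • (Θ t x - fourierCoeff Θ 0 x)}

/-- `A` is a matrix-valued truncated Toeplitz operator on `K_Θ`, i.e. `A ∈ T_Θ`: there is a
symbol `Φ ∈ L²(L(E))` such that `A f = P_Θ (Φ f)` for every `f` in
`K_Θ^∞ = K_Θ ∩ H^∞(E)`; the compression is expressed by: `A f ∈ K_Θ` and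
`⟪A f, g⟫ = ⟪Φ f, g⟫` for every `g ∈ K_Θ`. -/
def MemTT (Θ : Circle2pi → (E →L[ℂ] E))
    (A : Lp E 2 haarCircle2pi →L[ℂ] Lp E 2 haarCircle2pi) : Prop :=
  ∃ Φ : Circle2pi → (E →L[ℂ] E), MemLp Φ 2 haarCircle2pi ∧
    ∀ f, MemK Θ f → MemLp (⇑f) ⊤ haarCircle2pi →
      MemK Θ (A f) ∧ ∀ g, MemK Θ g → ⟪A f, g⟫ = ∫ t, ⟪Φ t (f t), g t⟫ ∂haarCircle2pi


section Aux

set_option linter.unusedSectionVars false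

lemma aux_negQMP : Measure.QuasiMeasurePreserving (fun t : Circle2pi => -t)
    haarCircle2pi haarCircle2pi :=
  (Measure.measurePreserving_neg haarCircle2pi).quasiMeasurePreserving

lemma aux_comp_neg_ae {α : Type*} {u v : Circle2pi → α} (h : u =ᵐ[haarCircle2pi] v) :
    (fun t => u (-t)) =ᵐ[haarCircle2pi] (fun t => v (-t)) :=
  aux_negQMP.ae_eq_comp h

lemma aux_ae_neg {p : Circle2pi → Prop} (h : ∀ᵐ t ∂haarCircle2pi, p t) :
    ∀ᵐ t ∂haarCircle2pi, p (-t) :=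
  aux_negQMP.ae h

lemma aux_fourier_neg_arg (n : ℤ) (t : Circle2pi) : fourier n (-t) = fourier (-n) t := by
  rw [fourier_apply, smul_neg, fourier_neg', ← fourier_neg]

lemma aux_fourier_memtop (n : ℤ) :
    MemLp (fun t : Circle2pi => (fourier n t : ℂ)) ⊤ haarCircle2pi := by
  refine memLp_top_of_bound ((fourier n).continuous.aestronglyMeasurable) 1 ?_
  filter_upwards with t
  simpa using (Circle.norm_coe _).le

lemma aux_memℒp_fourier_smul (n : ℤ) {f : Circle2pi → E} (hf : MemLp f 2 haarCircle2pi) :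
    MemLp (fun t => fourier n t • f t) 2 haarCircle2pi :=
  hf.smul (p := ⊤) (aux_fourier_memtop n)

lemma aux_integrable_of_memℒp2 {f : Circle2pi → E} (hf : MemLp f 2 haarCircle2pi) :
    Integrable f haarCircle2pi :=
  memLp_one_iff_integrable.mp (hf.mono_exponent (by norm_num))

lemma aux_integrable_fourier_smul (n : ℤ) (f : Lp E 2 haarCircle2pi) :
    Integrable (fun t => fourier n t • f t) haarCircle2pi :=
  aux_integrable_of_memℒp2 (aux_memℒp_fourier_smul n (Lp.memLp f))

lemma aux_fourierCoeff_congr {f g : Circle2pi → E} (h : f =ᵐ[haarCircle2pi] g) (n : ℤ) :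
    fourierCoeff f n = fourierCoeff g n := by
  unfold fourierCoeff
  exact integral_congr_ae (h.mono fun t ht => by dsimp only; rw [ht])

lemma aux_fourierCoeff_fourier_smul (m n : ℤ) (f : Circle2pi → E) :
    fourierCoeff (fun t => fourier m t • f t) n = fourierCoeff f (n - m) := by
  unfold fourierCoeff
  congr 1
  ext t
  rw [smul_smul, ← fourier_add]
  congr 2
  ring

lemma aux_adj_apply (U : E →L[ℂ] E) (hU : U ∈ unitary (E →L[ℂ] E)) (x : E) :
    adjoint U (U x) = x := by
  have h1 : adjoint U ∘L U = 1 := by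
    rw [← star_eq_adjoint]; exact Unitary.star_mul_self_of_mem hU
  calc adjoint U (U x) = (adjoint U ∘L U) x := rfl
  _ = x := by rw [h1]; rfl

lemma aux_unitary_inner (U : E →L[ℂ] E) (hU : U ∈ unitary (E →L[ℂ] E)) (x y : E) :
    ⟪U x, U y⟫ = ⟪x, y⟫ := by
  rw [← adjoint_inner_right, aux_adj_apply U hU]

lemma aux_unitary_norm (U : E →L[ℂ] E) (hU : U ∈ unitary (E →L[ℂ] E)) (x : E) :
    ‖U x‖ = ‖x‖ := by
  have h := aux_unitary_inner U hU x x
  have h1 : (‖U x‖ : ℝ) ^ 2 = ‖x‖ ^ 2 := by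
    rw [← @inner_self_eq_norm_sq ℂ, ← @inner_self_eq_norm_sq ℂ, h]
  nlinarith [norm_nonneg (U x), norm_nonneg x]

lemma aux_aesm_apply {Θ : Circle2pi → (E →L[ℂ] E)} (hΘ : AEStronglyMeasurable Θ haarCircle2pi)
    {g : Circle2pi → E} (hg : AEStronglyMeasurable g haarCircle2pi) :
    AEStronglyMeasurable (fun t => Θ t (g t)) haarCircle2pi :=
  (ContinuousLinearMap.id ℂ (E →L[ℂ] E)).aestronglyMeasurable_comp₂ hΘ hg

lemma aux_memℒp_apply {Θ : Circle2pi → (E →L[ℂ] E)}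
    (hmeas : AEStronglyMeasurable Θ haarCircle2pi)
    (hunit : ∀ᵐ t ∂haarCircle2pi, Θ t ∈ unitary (E →L[ℂ] E))
    {g : Circle2pi → E} (hg : MemLp g 2 haarCircle2pi) :
    MemLp (fun t => Θ t (g t)) 2 haarCircle2pi := by
  refine MemLp.of_le hg (aux_aesm_apply hmeas hg.aestronglyMeasurable) ?_
  filter_upwards [hunit] with t ht
  rw [aux_unitary_norm _ ht]

lemma aux_integral_fourier {l : ℤ} (hl : l ≠ 0) :
    ∫ t, fourier l t ∂haarCircle2pi = 0 :=
  integral_eq_zero_of_add_right_eq_neg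
    (fourier_add_half_inv_index hl (by positivity))

lemma aux_fourierCoeff_const (x : E) {k : ℤ} (hk : k ≠ 0) :
    fourierCoeff (fun _ : Circle2pi => x) k = 0 := by
  unfold fourierCoeff
  rw [integral_smul_const, aux_integral_fourier (neg_ne_zero.2 hk), zero_smul]

/-- The monomial `z^n x` as an element of `L²(E)`. -/
def auxMono (n : ℤ) (x : E) : Lp E 2 haarCircle2pi :=
  MemLp.toLp _ (aux_memℒp_fourier_smul n (memLp_const x))

lemma auxMono_coe (n : ℤ) (x : E) :
    ⇑(auxMono n x) =ᵐ[haarCircle2pi] fun t => fourier n t • x :=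
  MemLp.coeFn_toLp _

lemma aux_fourierCoeff_mono (n m : ℤ) (x : E) (h : m ≠ n) :
    fourierCoeff (⇑(auxMono n x)) m = 0 := by
  rw [aux_fourierCoeff_congr (auxMono_coe n x) m,
    aux_fourierCoeff_fourier_smul n m (fun _ => x), aux_fourierCoeff_const x (sub_ne_zero.2 h)]

lemma aux_memH2_mono {n : ℤ} (hn : 0 ≤ n) (x : E) : MemH2 (auxMono n x) :=
  fun m hm => aux_fourierCoeff_mono n m x (by omega)

lemma aux_inner_mono (u : Lp E 2 haarCircle2pi) (n : ℤ) (x : E) :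
    (starRingEnd ℂ) ⟪u, auxMono n x⟫ = ⟪x, fourierCoeff (⇑u) n⟫ := by
  rw [L2.inner_def]
  have h1 : ∫ t, ⟪u t, (auxMono n x) t⟫ ∂haarCircle2pi
      = ∫ t, ⟪u t, fourier n t • x⟫ ∂haarCircle2pi := by
    refine integral_congr_ae ?_
    filter_upwards [auxMono_coe n x] with t ht
    rw [ht]
  rw [h1, ← integral_conj]
  have h2 : ∀ t : Circle2pi, (starRingEnd ℂ) ⟪u t, fourier n t • x⟫
      = ⟪x, fourier (-n) t • u t⟫ := by
    intro t
    rw [inner_conj_symm, inner_smul_left, inner_smul_right, ← fourier_neg]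
  simp_rw [h2]
  rw [integral_inner (aux_integrable_fourier_smul (-n) u) x]
  rfl

lemma aux_coeff_eq_zero_of_inner (u : Lp E 2 haarCircle2pi) (n : ℤ)
    (h : ∀ x : E, ⟪u, auxMono n x⟫ = (0 : ℂ)) : fourierCoeff (⇑u) n = 0 := by
  have := aux_inner_mono u n (fourierCoeff (⇑u) n)
  rw [h, map_zero] at this
  exact inner_self_eq_zero.mp this.symm

/-- The scalar component `t ↦ ⟪e, F t⟫` of an `L²(E)` function, as an element of `L²(ℂ)`. -/
def auxComp (e : E) (F : Lp E 2 haarCircle2pi) : Lp ℂ 2 haarCircle2pi :=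
  MemLp.toLp (fun t => (⟪e, F t⟫ : ℂ)) <| by
    refine MemLp.of_le_mul (c := ‖e‖) (Lp.memLp F)
      ((innerSL ℂ e).continuous.comp_aestronglyMeasurable (Lp.aestronglyMeasurable F)) ?_
    filter_upwards with t
    exact norm_inner_le_norm e (F t)

lemma auxComp_coe (e : E) (F : Lp E 2 haarCircle2pi) :
    ⇑(auxComp e F) =ᵐ[haarCircle2pi] fun t => (⟪e, F t⟫ : ℂ) :=
  MemLp.coeFn_toLp _

lemma aux_fourierCoeff_comp (e : E) (F : Lp E 2 haarCircle2pi) (n : ℤ) :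
    fourierCoeff (⇑(auxComp e F)) n = ⟪e, fourierCoeff (⇑F) n⟫ := by
  rw [aux_fourierCoeff_congr (auxComp_coe e F) n]
  unfold fourierCoeff
  rw [← integral_inner (aux_integrable_fourier_smul (-n) F) e]
  congr 1
  ext t
  rw [inner_smul_right, smul_eq_mul]

/-- Vector-valued Parseval-type orthogonality: if for each frequency at least one of the two
Fourier coefficients vanishes, the two functions are orthogonal. -/
lemma aux_inner_eq_zero (F G : Lp E 2 haarCircle2pi)
    (h : ∀ n : ℤ, fourierCoeff (⇑F) n = 0 ∨ fourierCoeff (⇑G) n = 0) :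
    ⟪F, G⟫ = (0 : ℂ) := by
  classical
  set b := stdOrthonormalBasis ℂ E with hb
  have key : ∀ i, ⟪auxComp (b i) F, auxComp (b i) G⟫ = (0 : ℂ) := by
    intro i
    rw [← fourierBasis.tsum_inner_mul_inner (auxComp (b i) F) (auxComp (b i) G)]
    have hzero : ∀ n : ℤ,
        (⟪auxComp (b i) F, fourierBasis n⟫ * ⟪fourierBasis n, auxComp (b i) G⟫ : ℂ) = 0 := by
      intro n
      rcases h n with h0 | h0
      · have hz : (⟪auxComp (b i) F, fourierBasis n⟫ : ℂ) = 0 := by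
          rw [← inner_conj_symm, ← HilbertBasis.repr_apply_apply, fourierBasis_repr,
            aux_fourierCoeff_comp, h0, inner_zero_right, map_zero]
        rw [hz, zero_mul]
      · have hz : (⟪fourierBasis n, auxComp (b i) G⟫ : ℂ) = 0 := by
          rw [← HilbertBasis.repr_apply_apply, fourierBasis_repr,
            aux_fourierCoeff_comp, h0, inner_zero_right]
        rw [hz, mul_zero]
    simp_rw [hzero]
    exact tsum_zero
  have hae : (fun t => (⟪F t, G t⟫ : ℂ)) =ᵐ[haarCircle2pi]
      fun t => ∑ i, (⟪(auxComp (b i) F) t, (auxComp (b i) G) t⟫ : ℂ) := by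
    have hall : ∀ᵐ t ∂haarCircle2pi, ∀ i,
        (auxComp (b i) F) t = (⟪b i, F t⟫ : ℂ) ∧ (auxComp (b i) G) t = (⟪b i, G t⟫ : ℂ) := by
      rw [ae_all_iff]
      intro i
      filter_upwards [auxComp_coe (b i) F, auxComp_coe (b i) G] with t h1 h2 using ⟨h1, h2⟩
    filter_upwards [hall] with t ht
    rw [← b.sum_inner_mul_inner (F t) (G t)]
    refine Finset.sum_congr rfl fun i _ => ?_
    rw [RCLike.inner_apply, (ht i).1, (ht i).2, inner_conj_symm, mul_comm]
  rw [L2.inner_def, integral_congr_ae hae, integral_finset_sum]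
  · exact Finset.sum_eq_zero fun i _ => by rw [← L2.inner_def, key i]
  · exact fun i _ => L2.integrable_inner (𝕜 := ℂ) (auxComp (b i) F) (auxComp (b i) G)

lemma aux_fourierCoeff_sub (a c : Lp E 2 haarCircle2pi) (n : ℤ) :
    fourierCoeff (⇑(a - c)) n = fourierCoeff (⇑a) n - fourierCoeff (⇑c) n := by
  have h : ⇑(a - c) =ᵐ[haarCircle2pi] ⇑a - ⇑c := Lp.coeFn_sub a c
  rw [aux_fourierCoeff_congr h n]
  unfold fourierCoeff
  rw [← integral_sub (aux_integrable_fourier_smul (-n) a) (aux_integrable_fourier_smul (-n) c)]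
  congr 1
  ext t
  simp [smul_sub]

lemma aux_memH2_sub {a c : Lp E 2 haarCircle2pi} (ha : MemH2 a) (hc : MemH2 c) :
    MemH2 (a - c) := fun n hn => by
  rw [aux_fourierCoeff_sub, ha n hn, hc n hn, sub_zero]

lemma aux_integrable_inner_apply {Θ : Circle2pi → (E →L[ℂ] E)}
    (hmeas : AEStronglyMeasurable Θ haarCircle2pi)
    (hunit : ∀ᵐ t ∂haarCircle2pi, Θ t ∈ unitary (E →L[ℂ] E))
    (a g : Lp E 2 haarCircle2pi) :
    Integrable (fun t => (⟪a t, Θ t (g t)⟫ : ℂ)) haarCircle2pi := by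
  set v : Lp E 2 haarCircle2pi :=
    MemLp.toLp _ (aux_memℒp_apply hmeas hunit (Lp.memLp g)) with hv
  have hvc : ⇑v =ᵐ[haarCircle2pi] fun t => Θ t (g t) := MemLp.coeFn_toLp _
  refine (L2.integrable_inner (𝕜 := ℂ) a v).congr ?_
  filter_upwards [hvc] with t ht
  rw [ht]

lemma aux_memK_sub {Θ : Circle2pi → (E →L[ℂ] E)} (hΘ : IsInner Θ)
    {a c : Lp E 2 haarCircle2pi} (ha : MemK Θ a) (hc : MemK Θ c) :
    MemK Θ (a - c) := by
  refine ⟨aux_memH2_sub ha.1 hc.1, fun g hg => ?_⟩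
  have h : (fun t => (⟪(a - c) t, Θ t (g t)⟫ : ℂ)) =ᵐ[haarCircle2pi]
      fun t => (⟪a t, Θ t (g t)⟫ : ℂ) - ⟪c t, Θ t (g t)⟫ := by
    filter_upwards [Lp.coeFn_sub a c] with t ht
    rw [ht]
    exact inner_sub_left _ _ _
  rw [integral_congr_ae h,
    integral_sub (aux_integrable_inner_apply hΘ.meas hΘ.unit a g)
      (aux_integrable_inner_apply hΘ.meas hΘ.unit c g),
    ha.2 g hg, hc.2 g hg, sub_zero]

/-- The key abstract step: if `g ∈ K_Θ` has vanishing 0-th Fourier coefficient, then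
`S_Θ S_Θ* g = g`. -/
lemma aux_key {Θ : Circle2pi → (E →L[ℂ] E)} (hΘ : IsInner Θ)
    {S A : Lp E 2 haarCircle2pi →L[ℂ] Lp E 2 haarCircle2pi}
    (hS : IsCompShift Θ S) (hA : IsCompShiftAdj Θ S A)
    {g : Lp E 2 haarCircle2pi} (hg : MemK Θ g) (hg0 : fourierCoeff (⇑g) 0 = 0) :
    S (A g) = g := by
  set h : Lp E 2 haarCircle2pi :=
    MemLp.toLp _ (aux_memℒp_fourier_smul (-1) (Lp.memLp g)) with hh
  have hhc : ⇑h =ᵐ[haarCircle2pi] fun t => fourier (-1) t • g t := MemLp.coeFn_toLp _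
  -- h ∈ K_Θ
  have hhH2 : MemH2 h := by
    intro n hn
    rw [aux_fourierCoeff_congr hhc n, aux_fourierCoeff_fourier_smul (-1) n (⇑g)]
    rcases eq_or_lt_of_le (show n ≤ -1 by omega) with h1 | h1
    · rw [show n - (-1) = 0 by omega, hg0]
    · exact hg.1 _ (by omega)
  have hhK : MemK Θ h := by
    refine ⟨hhH2, fun w hw => ?_⟩
    set w' : Lp E 2 haarCircle2pi :=
      MemLp.toLp _ (aux_memℒp_fourier_smul 1 (Lp.memLp w)) with hw'
    have hw'c : ⇑w' =ᵐ[haarCircle2pi] fun t => fourier 1 t • w t := MemLp.coeFn_toLp _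
    have hw'H2 : MemH2 w' := by
      intro n hn
      rw [aux_fourierCoeff_congr hw'c n, aux_fourierCoeff_fourier_smul 1 n (⇑w)]
      exact hw _ (by omega)
    have heq : (fun t => (⟪h t, Θ t (w t)⟫ : ℂ)) =ᵐ[haarCircle2pi]
        fun t => (⟪g t, Θ t (w' t)⟫ : ℂ) := by
      filter_upwards [hhc, hw'c] with t h1 h2
      rw [h1, h2]
      rw [inner_smul_left, ← fourier_neg, neg_neg, _root_.map_smul, inner_smul_right]
    rw [integral_congr_ae heq, hg.2 w' hw'H2]
  -- A g = h
  have hAgK : MemK Θ (A g) := (hA g hg).1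
  have hinner : ∀ d : Lp E 2 haarCircle2pi, MemK Θ d → (⟪A g, d⟫ : ℂ) = ⟪h, d⟫ := by
    intro d hd
    rw [(hA g hg).2 d hd, ← inner_conj_symm, ((hS d hd).2 g hg), ← integral_conj]
    have : ∀ t : Circle2pi, (starRingEnd ℂ) (⟪fourier 1 t • d t, g t⟫ : ℂ)
        = ⟪fourier (-1) t • g t, d t⟫ := by
      intro t
      rw [inner_conj_symm, inner_smul_right, inner_smul_left, ← fourier_neg, neg_neg]
    simp_rw [this]
    rw [L2.inner_def]
    refine integral_congr_ae ?_
    filter_upwards [hhc] with t ht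
    rw [ht]
  have hAg : A g = h := by
    have hd : MemK Θ (A g - h) := aux_memK_sub hΘ hAgK hhK
    have h0 : (⟪A g - h, A g - h⟫ : ℂ) = 0 := by
      rw [inner_sub_left, hinner _ hd, sub_self]
    rw [← sub_eq_zero]
    exact inner_self_eq_zero.mp h0
  -- S h = g
  have hShK : MemK Θ (S h) := (hS h hhK).1
  have hinner2 : ∀ e : Lp E 2 haarCircle2pi, MemK Θ e → (⟪S h, e⟫ : ℂ) = ⟪g, e⟫ := by
    intro e he
    rw [(hS h hhK).2 e he, L2.inner_def]
    refine integral_congr_ae ?_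
    filter_upwards [hhc] with t ht
    rw [ht]
    rw [smul_smul, ← fourier_add]
    norm_num
  have hSh : S h = g := by
    have he : MemK Θ (S h - g) := aux_memK_sub hΘ hShK hg
    have h0 : (⟪S h - g, S h - g⟫ : ℂ) = 0 := by
      rw [inner_sub_left, hinner2 _ he, sub_self]
    rw [← sub_eq_zero]
    exact inner_self_eq_zero.mp h0
  rw [hAg, hSh]

end Aux


lemma aux_tild_meas {Θ : Circle2pi → (E →L[ℂ] E)} (hΘ : IsInner Θ) :
    AEStronglyMeasurable (tild Θ) haarCircle2pi := by
  have h1 : AEStronglyMeasurable (Θ ∘ (fun t : Circle2pi => -t)) haarCircle2pi :=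
    hΘ.meas.comp_quasiMeasurePreserving aux_negQMP
  exact (ContinuousLinearMap.adjoint :
    (E →L[ℂ] E) ≃ₗᵢ⋆[ℂ] (E →L[ℂ] E)).continuous.comp_aestronglyMeasurable h1

lemma aux_tild_unit {Θ : Circle2pi → (E →L[ℂ] E)} (hΘ : IsInner Θ) :
    ∀ᵐ t ∂haarCircle2pi, tild Θ t ∈ unitary (E →L[ℂ] E) := by
  filter_upwards [aux_ae_neg hΘ.unit] with t ht
  show adjoint (Θ (-t)) ∈ unitary (E →L[ℂ] E)
  rw [← star_eq_adjoint]
  exact Unitary.star_mem ht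

set_option maxHeartbeats 2000000 in
/-- Let `Θ` be inner, `Θ̃(z) = Θ(z̄)*`, and `τ` the unitary operator
`(τ f)(e^{it}) = e^{-it} Θ(e^{-it})* f(e^{-it})`. If `f ∈ K_Θ̃` is orthogonal to
`D̃_* = {(1/z)(Θ̃(z) - Θ̃(0)) x : x ∈ E}`, then `S_Θ S_Θ* (τ* f) = τ* f`,
where `S_Θ` is the compressed shift on `K_Θ`. -/
theorem compShift_compShiftAdj_tau_adj (Θ : Circle2pi → (E →L[ℂ] E)) (hΘ : IsInner Θ)
    (τ : Lp E 2 haarCircle2pi →L[ℂ] Lp E 2 haarCircle2pi) (hτ : IsTau Θ τ)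
    (S A : Lp E 2 haarCircle2pi →L[ℂ] Lp E 2 haarCircle2pi)
    (hS : IsCompShift Θ S) (hA : IsCompShiftAdj Θ S A)
    (f : Lp E 2 haarCircle2pi) (hf : MemK (tild Θ) f)
    (hfD : ∀ g ∈ DStarSet (tild Θ), ⟪f, g⟫ = (0 : ℂ)) :
    S (A (adjoint τ f)) = adjoint τ f := by
  set g := adjoint τ f with hgdef
  have hmono : ∀ (n : ℤ) (x : E), (⟪g, auxMono n x⟫ : ℂ)
      = ∫ t, ⟪f t, (tild Θ) t (fourier (-(n+1)) t • x)⟫ ∂haarCircle2pi := by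
    intro n x
    rw [hgdef, adjoint_inner_left, L2.inner_def]
    refine integral_congr_ae ?_
    have hc := aux_comp_neg_ae (u := ⇑(auxMono n x))
        (v := fun t => fourier n t • x) (auxMono_coe n x)
    filter_upwards [hτ (auxMono n x), hc] with t h1 h2
    have h2' : (⇑(auxMono n x)) (-t) = fourier n (-t) • x := h2
    rw [h1, h2']
    show ⟪(f : Circle2pi → E) t, fourier (-1) t • adjoint (Θ (-t)) (fourier n (-t) • x)⟫
        = ⟪(f : Circle2pi → E) t, adjoint (Θ (-t)) (fourier (-(n+1)) t • x)⟫
    rw [aux_fourier_neg_arg, _root_.map_smul, _root_.map_smul, smul_smul, ← fourier_add,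
      show (-1 : ℤ) + -n = -(n+1) by ring]
  have hgH2 : MemH2 g := by
    intro n hn
    refine aux_coeff_eq_zero_of_inner g n (fun x => ?_)
    rw [hmono n x, ← hf.2 (auxMono (-(n+1)) x) (aux_memH2_mono (by omega) x)]
    refine integral_congr_ae ?_
    filter_upwards [auxMono_coe (-(n+1)) x] with t ht
    rw [ht]
  have hg0 : fourierCoeff (⇑g) 0 = 0 := by
    refine aux_coeff_eq_zero_of_inner g 0 (fun x => ?_)
    rw [hmono 0 x]
    set c : E := fourierCoeff (tild Θ) 0 x with hc
    have hmem1 : MemLp (fun t => tild Θ t x) 2 haarCircle2pi := by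
      have htop : MemLp (fun t => tild Θ t x) ⊤ haarCircle2pi := by
        refine memLp_top_of_bound
          (aux_aesm_apply (aux_tild_meas hΘ) aestronglyMeasurable_const) ‖x‖ ?_
        filter_upwards [aux_tild_unit hΘ] with t ht
        rw [aux_unitary_norm _ ht]
      exact htop.mono_exponent le_top
    set W1 : Lp E 2 haarCircle2pi := MemLp.toLp _ (aux_memℒp_fourier_smul (-1) hmem1) with hW1
    have hW1c : ⇑W1 =ᵐ[haarCircle2pi] fun t => fourier (-1) t • tild Θ t x :=
      MemLp.coeFn_toLp _
    set W2 : Lp E 2 haarCircle2pi := auxMono (-1) c with hW2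
    have hDmem : W1 - W2 ∈ DStarSet (tild Θ) := by
      refine ⟨x, ?_⟩
      filter_upwards [Lp.coeFn_sub W1 W2, hW1c, auxMono_coe (-1) c] with t h1 h2 h3
      rw [h1, Pi.sub_apply, h2, h3, ← smul_sub]
    have hfW2 : (⟪f, W2⟫ : ℂ) = 0 := by
      have h2 := aux_inner_mono f (-1) c
      rw [hf.1 (-1) (by norm_num), inner_zero_right] at h2
      calc (⟪f, W2⟫ : ℂ) = (starRingEnd ℂ) ((starRingEnd ℂ) ⟪f, W2⟫) := (Complex.conj_conj _).symm
      _ = 0 := by rw [hW2, h2, map_zero]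
    have hfW1 : (⟪f, W1⟫ : ℂ) = 0 := by
      have h0 := hfD (W1 - W2) hDmem
      rw [inner_sub_right, hfW2, sub_zero] at h0
      exact h0
    rw [← hfW1, L2.inner_def]
    refine integral_congr_ae ?_
    filter_upwards [hW1c] with t ht
    rw [ht]
    show ⟪(f : Circle2pi → E) t, tild Θ t (fourier (-(0+1)) t • x)⟫
        = ⟪(f : Circle2pi → E) t, fourier (-1) t • tild Θ t x⟫
    rw [_root_.map_smul]
    norm_num
  have hgOrth : ∀ h : Lp E 2 haarCircle2pi, MemH2 h →
      ∫ t, ⟪g t, Θ t (h t)⟫ ∂haarCircle2pi = 0 := by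
    intro h hh
    set v : Lp E 2 haarCircle2pi :=
      MemLp.toLp _ (aux_memℒp_apply hΘ.meas hΘ.unit (Lp.memLp h)) with hv
    have hvc : ⇑v =ᵐ[haarCircle2pi] fun t => Θ t (h t) := MemLp.coeFn_toLp _
    have h1 : ∫ t, ⟪g t, Θ t (h t)⟫ ∂haarCircle2pi = ⟪g, v⟫ := by
      rw [L2.inner_def]
      exact integral_congr_ae (by filter_upwards [hvc] with t ht; rw [ht])
    rw [h1, hgdef, adjoint_inner_left]
    refine aux_inner_eq_zero f (τ v) (fun n => ?_)
    rcases lt_or_ge n 0 with hn | hn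
    · exact Or.inl (hf.1 n hn)
    · refine Or.inr ?_
      have hτv : ⇑(τ v) =ᵐ[haarCircle2pi] fun t => fourier (-1) t • (h : Circle2pi → E) (-t) := by
        have hcomp := aux_comp_neg_ae (u := ⇑v)
            (v := fun t => Θ t ((h : Circle2pi → E) t)) hvc
        filter_upwards [hτ v, hcomp, aux_ae_neg hΘ.unit] with t h1 h2 h3
        have h2' : (⇑v) (-t) = Θ (-t) ((h : Circle2pi → E) (-t)) := h2
        rw [h1, h2', aux_adj_apply _ h3]
      rw [aux_fourierCoeff_congr hτv n]
      unfold fourierCoeff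
      have h2 : ∀ t : Circle2pi, fourier (-n) t • fourier (-1) t • (h : Circle2pi → E) (-t)
          = (fun s => fourier (n+1) s • (h : Circle2pi → E) s) (-t) := by
        intro t
        show _ = fourier (n+1) (-t) • (h : Circle2pi → E) (-t)
        rw [aux_fourier_neg_arg, smul_smul, ← fourier_add]
        norm_num
        rw [mul_comm]
      simp_rw [h2]
      rw [integral_neg_eq_self (fun s => fourier (n+1) s • (h : Circle2pi → E) s) haarCircle2pi]
      have h3 := hh (-(n+1)) (by omega)
      unfold fourierCoeff at h3
      simpa using h3
  exact aux_key hΘ hS hA ⟨hgH2, hgOrth⟩ hg0
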